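/- For every pmf R on 𝒳 and every pmf P on 𝒳 with P(x)>0 for all x, D(R||P) ≥ ( φ( max_{A⊆𝒳} min{P(A), 1−P(A)} ) · min_{x∈𝒳} P(x) / 2 ) · χ²(R||P), where P(A)=Σ_{x∈A}P(x). -/

import Mathlib

/-- A probability mass function on a finite set. -/
def IsPmf {𝒳 : Type*} [Fintype 𝒳] (P : 𝒳 → ℝ) : Prop :=
  (∀ x, 0 ≤ P x) ∧ ∑ x, P x = 1

/-- KL divergence `D(R‖P) = ∑ₓ R(x) log(R(x)/P(x))`. -/
noncomputable def klDiv {𝒳 : Type*} [Fintype 𝒳] (R P : 𝒳 → ℝ) : ℝ :=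
  ∑ x, R x * Real.log (R x / P x)

/-- χ²-divergence `χ²(R‖P) = ∑ₓ (R(x) − P(x))²/P(x)`. -/
noncomputable def chiSq {𝒳 : Type*} [Fintype 𝒳] (R P : 𝒳 → ℝ) : ℝ :=
  ∑ x, (R x - P x) ^ 2 / P x

/-- The function `φ(p) = (1/(1−2p)) log((1−p)/p)` for `p ∈ [0,1/2)`, with `φ(1/2) = 2`. -/
noncomputable def phiFun (p : ℝ) : ℝ :=
  if p = 1 / 2 then 2 else (1 / (1 - 2 * p)) * Real.log ((1 - p) / p)

/-- `max_{A ⊆ 𝒳} min{P(A), 1 − P(A)}` where `P(A) = ∑_{x∈A} P(x)`. -/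
noncomputable def balSep {𝒳 : Type*} [Fintype 𝒳] (P : 𝒳 → ℝ) : ℝ :=
  (Finset.univ : Finset 𝒳).powerset.sup' (Finset.powerset_nonempty _)
    (fun A => min (∑ x ∈ A, P x) (1 - ∑ x ∈ A, P x))

/- ### Auxiliary calculus helpers -/

private lemma le_of_deriv_nonneg' {f f' : ℝ → ℝ} {a b : ℝ} (hab : a ≤ b)
    (hc : ContinuousOn f (Set.Icc a b))
    (hd : ∀ x ∈ Set.Ioo a b, HasDerivAt f (f' x) x)
    (h0 : ∀ x ∈ Set.Ioo a b, 0 ≤ f' x) : f a ≤ f b := by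
  have hmono : MonotoneOn f (Set.Icc a b) := by
    apply monotoneOn_of_deriv_nonneg (convex_Icc a b) hc
    · intro x hx
      rw [interior_Icc] at hx
      exact (hd x hx).differentiableAt.differentiableWithinAt
    · intro x hx
      rw [interior_Icc] at hx
      rw [(hd x hx).deriv]
      exact h0 x hx
  exact hmono (Set.left_mem_Icc.2 hab) (Set.right_mem_Icc.2 hab) hab

private lemma le_of_deriv_nonpos' {f f' : ℝ → ℝ} {a b : ℝ} (hab : a ≤ b)
    (hc : ContinuousOn f (Set.Icc a b))
    (hd : ∀ x ∈ Set.Ioo a b, HasDerivAt f (f' x) x)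
    (h0 : ∀ x ∈ Set.Ioo a b, f' x ≤ 0) : f b ≤ f a := by
  have hmono : AntitoneOn f (Set.Icc a b) := by
    apply antitoneOn_of_deriv_nonpos (convex_Icc a b) hc
    · intro x hx
      rw [interior_Icc] at hx
      exact (hd x hx).differentiableAt.differentiableWithinAt
    · intro x hx
      rw [interior_Icc] at hx
      rw [(hd x hx).deriv]
      exact h0 x hx
  exact hmono (Set.left_mem_Icc.2 hab) (Set.right_mem_Icc.2 hab) hab

/- ### Bounds on `L u = log(1+u) - log(1-u)` -/

private lemma hasDerivAt_L {x : ℝ} (h0 : -1 < x) (h1 : x < 1) :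
    HasDerivAt (fun y : ℝ => Real.log (1+y) - Real.log (1-y)) ((1+x)⁻¹ + (1-x)⁻¹) x := by
  have d1 : HasDerivAt (fun y : ℝ => Real.log (1+y)) ((1+x)⁻¹ * 1) x := by
    exact (Real.hasDerivAt_log (by linarith)).comp x ((hasDerivAt_id x).const_add 1)
  have d2 : HasDerivAt (fun y : ℝ => Real.log (1-y)) ((1-x)⁻¹ * (-1)) x := by
    exact (Real.hasDerivAt_log (by linarith : (1:ℝ)-x ≠ 0)).comp x ((hasDerivAt_id x).const_sub 1)
  have := d1.sub d2
  exact this.congr_deriv (by ring)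

private lemma continuousOn_L {a b : ℝ} (ha : -1 < a) (hb : b < 1) :
    ContinuousOn (fun y : ℝ => Real.log (1+y) - Real.log (1-y)) (Set.Icc a b) := by
  apply ContinuousOn.sub
  · apply ContinuousOn.log (by fun_prop)
    intro x hx
    have := hx.1
    intro h; nlinarith
  · apply ContinuousOn.log (by fun_prop)
    intro x hx
    have := hx.2
    intro h; nlinarith

private lemma L_nonneg {u : ℝ} (h0 : 0 ≤ u) (h1 : u < 1) :
    0 ≤ Real.log (1+u) - Real.log (1-u) := by
  have := Real.log_le_log (by linarith : (0:ℝ) < 1-u) (by linarith : 1-u ≤ 1+u)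
  linarith

private lemma two_mul_le_L {u : ℝ} (h0 : 0 ≤ u) (h1 : u < 1) :
    2*u ≤ Real.log (1+u) - Real.log (1-u) := by
  have key := le_of_deriv_nonneg'
    (f := fun y : ℝ => Real.log (1+y) - Real.log (1-y) - 2*y)
    (f' := fun y : ℝ => (1+y)⁻¹ + (1-y)⁻¹ - 2) h0
    ?_ ?_ ?_
  · simp only [add_zero, sub_zero, mul_zero, Real.log_one, sub_self, zero_sub] at key
    linarith
  · exact (continuousOn_L (by linarith) h1).sub (by fun_prop)
  · intro x hx
    have := (hasDerivAt_L (by linarith [hx.1]) (by linarith [hx.2] : x < 1)).sub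
      (((hasDerivAt_id x).const_mul 2))
    exact this.congr_deriv (by simp)
  · intro x hx
    show 0 ≤ (1+x)⁻¹ + (1-x)⁻¹ - 2
    have hx0 : (0:ℝ) < 1+x := by linarith [hx.1]
    have hx1 : (0:ℝ) < 1-x := by linarith [hx.2]
    have hx0' : (1:ℝ)+x ≠ 0 := hx0.ne'
    have hx1' : (1:ℝ)-x ≠ 0 := hx1.ne'
    have he : (1+x)⁻¹ + (1-x)⁻¹ = 2/((1+x)*(1-x)) := by
      field_simp
      ring
    rw [he]
    have h2 : (1+x)*(1-x) ≤ 1 := by nlinarith [hx.1]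
    have h3 : (0:ℝ) < (1+x)*(1-x) := by positivity
    rw [sub_nonneg, le_div_iff₀ h3]
    nlinarith

private lemma L_le {u : ℝ} (h0 : 0 ≤ u) (h1 : u < 1) :
    (1-u^2) * (Real.log (1+u) - Real.log (1-u)) ≤ 2*u := by
  have key := le_of_deriv_nonneg'
    (f := fun y : ℝ => 2*y - (1-y^2)*(Real.log (1+y) - Real.log (1-y)))
    (f' := fun y : ℝ => 2*y*(Real.log (1+y) - Real.log (1-y))) h0
    ?_ ?_ ?_
  · norm_num at key
    linarith
  · apply ContinuousOn.sub (by fun_prop)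
    exact ContinuousOn.mul (by fun_prop) (continuousOn_L (by linarith) h1)
  · intro x hx
    have hx0 : (0:ℝ) < 1+x := by linarith [hx.1]
    have hx1 : (0:ℝ) < 1-x := by linarith [hx.2.trans_le h1.le]
    have dq : HasDerivAt (fun y : ℝ => 1-y^2) (-(2*x)) x := by
      have := (hasDerivAt_pow 2 x).const_sub 1
      exact this.congr_deriv (by norm_num)
    have dL := hasDerivAt_L (by linarith) (by linarith : x < 1)
    have := ((hasDerivAt_id x).const_mul 2).sub (dq.mul dL)
    refine this.congr_deriv ?_
    have hx0' : (1:ℝ)+x ≠ 0 := by positivity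
    have hx1' : (1:ℝ)-x ≠ 0 := hx1.ne'
    have e : (1-x^2) * ((1+x)⁻¹ + (1-x)⁻¹) = 2 := by
      field_simp
      ring
    linear_combination -e
  · intro x hx
    have hx1 : x < 1 := by linarith [hx.2]
    exact mul_nonneg (by linarith [hx.1]) (L_nonneg hx.1.le hx1)

private lemma L_div_mono {v u : ℝ} (hv : 0 < v) (hvu : v ≤ u) (h1 : u < 1) :
    (Real.log (1+v) - Real.log (1-v))/v ≤ (Real.log (1+u) - Real.log (1-u))/u := by
  have key := le_of_deriv_nonneg'
    (f := fun y : ℝ => (Real.log (1+y) - Real.log (1-y))/y)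
    (f' := fun y : ℝ => (((1+y)⁻¹ + (1-y)⁻¹) * y - (Real.log (1+y) - Real.log (1-y)) * 1)/y^2)
    hvu ?_ ?_ ?_
  · exact key
  · apply ContinuousOn.div (continuousOn_L (by linarith) h1) (by fun_prop)
    intro x hx
    exact (lt_of_lt_of_le hv hx.1).ne'
  · intro x hx
    have hx0 : 0 < x := hv.trans hx.1
    exact (hasDerivAt_L (by linarith) (hx.2.trans h1)).div (hasDerivAt_id x) hx0.ne'
  · intro x hx
    have hx0 : 0 < x := hv.trans hx.1
    have hx1 : x < 1 := hx.2.trans h1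
    apply div_nonneg _ (sq_nonneg x)
    have hA2 := L_le hx0.le hx1
    have hx0' : (1:ℝ)+x ≠ 0 := by positivity
    have hx1' : (1:ℝ)-x ≠ 0 := by intro h; linarith [hx1]
    have he : (1+x)⁻¹ + (1-x)⁻¹ = 2/((1+x)*(1-x)) := by
      field_simp
      ring
    rw [he, sub_nonneg, mul_one]
    rw [div_mul_eq_mul_div, le_div_iff₀ (by nlinarith : (0:ℝ) < (1+x)*(1-x))]
    nlinarith [hA2]

/- ### Properties of `phiFun` -/

private lemma log_sub_log {p : ℝ} (hp : 0 < p) (hp1 : p < 1) :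
    Real.log (1+(1-2*p)) - Real.log (1-(1-2*p)) = Real.log (1-p) - Real.log p := by
  have h1 : (1:ℝ)+(1-2*p) = 2*(1-p) := by ring
  have h2 : (1:ℝ)-(1-2*p) = 2*p := by ring
  rw [h1, h2, Real.log_mul two_ne_zero (by linarith), Real.log_mul two_ne_zero hp.ne']
  ring

private lemma phiFun_lt {p : ℝ} (hp : 0 < p) (h : p < 1/2) :
    phiFun p = (Real.log (1-p) - Real.log p)/(1-2*p) := by
  rw [phiFun, if_neg (by intro he; rw [he] at h; norm_num at h),
    Real.log_div (by linarith) hp.ne']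
  ring

private lemma phi_antitone {q r : ℝ} (hq : 0 < q) (hqr : q ≤ r) (hr : r ≤ 1/2) :
    phiFun r ≤ phiFun q := by
  rcases eq_or_lt_of_le hr with hr2 | hr2
  · rw [hr2, phiFun, if_pos rfl]
    rcases eq_or_lt_of_le (hqr.trans hr) with hq2 | hq2
    · rw [hq2, phiFun, if_pos rfl]
    · rw [phiFun_lt hq hq2]
      have h0 : (0:ℝ) < 1 - 2*q := by linarith
      have hL := two_mul_le_L (u := 1-2*q) (by linarith) (by linarith)
      rw [log_sub_log hq (by linarith)] at hL
      rw [le_div_iff₀ h0]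
      linarith
  · have hq2 : q < 1/2 := lt_of_le_of_lt hqr hr2
    rw [phiFun_lt hq hq2, phiFun_lt (lt_of_lt_of_le hq hqr) hr2]
    have := L_div_mono (v := 1-2*r) (u := 1-2*q) (by linarith) (by linarith) (by linarith)
    rwa [log_sub_log hq (by linarith), log_sub_log (hq.trans_le hqr) (by linarith)] at this

private lemma two_le_phi {p : ℝ} (hp : 0 < p) (h2 : p ≤ 1/2) : 2 ≤ phiFun p := by
  have := phi_antitone hp h2 (le_refl (1/2))
  rwa [phiFun, if_pos rfl] at this

private lemma phi_mul_aux {p : ℝ} (hp : 0 < p) (h2 : p ≤ 1/2) :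
    2 * phiFun p * (p*(1-p)) ≤ 1 := by
  rcases eq_or_lt_of_le h2 with he | hlt
  · rw [he, phiFun, if_pos rfl]
    norm_num
  · have hu0 : (0:ℝ) < 1-2*p := by linarith
    have hA := L_le (u := 1-2*p) hu0.le (by linarith)
    rw [log_sub_log hp (by linarith)] at hA
    rw [phiFun_lt hp hlt]
    have hEq : 2 * ((Real.log (1-p) - Real.log p)/(1-2*p)) * (p*(1-p))
        = (2*(p*(1-p))*(Real.log (1-p) - Real.log p))/(1-2*p) := by ring
    rw [hEq, div_le_one hu0]
    nlinarith [hA]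

private lemma log_ratio {p : ℝ} (hp : 0 < p) (h2 : p ≤ 1/2) :
    Real.log (1-p) - Real.log p = phiFun p * (1-2*p) := by
  rcases eq_or_lt_of_le h2 with he | hlt
  · rw [he]
    norm_num
  · rw [phiFun_lt hp hlt, div_mul_cancel₀ _ (ne_of_gt (by linarith : (0:ℝ) < 1-2*p))]

/- ### The binary function and its derivative structure -/

private noncomputable def Ffun (p c x : ℝ) : ℝ :=
  x * Real.log x + (1-x) * Real.log (1-x) - x * Real.log p - (1-x) * Real.log (1-p)
    - c * (x-p)^2

private noncomputable def Gfun (p c x : ℝ) : ℝ :=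
  Real.log x - Real.log (1-x) - Real.log p + Real.log (1-p) - 2*c*(x-p)

private lemma hasDerivAt_Ffun {p c x : ℝ} (h0 : 0 < x) (h1 : x < 1) :
    HasDerivAt (Ffun p c) (Gfun p c x) x := by
  have d1 : HasDerivAt (fun y : ℝ => y * Real.log y) (Real.log x + 1) x :=
    Real.hasDerivAt_mul_log h0.ne'
  have dm : HasDerivAt (fun y : ℝ => 1 - y) (-1) x := (hasDerivAt_id x).const_sub 1
  have d2 : HasDerivAt (fun y : ℝ => (1-y) * Real.log (1-y)) ((Real.log (1-x) + 1) * (-1)) x := by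
    have := (Real.hasDerivAt_mul_log (by linarith : (1:ℝ)-x ≠ 0)).comp x dm
    simpa [Function.comp_def] using this
  have d3 : HasDerivAt (fun y : ℝ => y * Real.log p) (1 * Real.log p) x :=
    (hasDerivAt_id x).mul_const _
  have d4 : HasDerivAt (fun y : ℝ => (1-y) * Real.log (1-p)) ((-1) * Real.log (1-p)) x :=
    dm.mul_const _
  have d5 : HasDerivAt (fun y : ℝ => c * (y-p)^2) (c * (2*(x-p))) x := by
    have h : HasDerivAt (fun y : ℝ => (y-p)^2) (2*(x-p)) x := by
      have := ((hasDerivAt_id x).sub_const p).pow 2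
      exact this.congr_deriv (by norm_num)
    exact h.const_mul c
  have := (((d1.add d2).sub d3).sub d4).sub d5
  refine this.congr_deriv ?_
  rw [Gfun]
  ring

private lemma hasDerivAt_Gfun {p c x : ℝ} (h0 : 0 < x) (h1 : x < 1) :
    HasDerivAt (Gfun p c) (x⁻¹ + (1-x)⁻¹ - 2*c) x := by
  have d1 : HasDerivAt Real.log x⁻¹ x := Real.hasDerivAt_log h0.ne'
  have dm : HasDerivAt (fun y : ℝ => 1 - y) (-1) x := (hasDerivAt_id x).const_sub 1
  have d2 : HasDerivAt (fun y : ℝ => Real.log (1-y)) ((1-x)⁻¹ * (-1)) x := by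
    have := (Real.hasDerivAt_log (by linarith : (1:ℝ)-x ≠ 0)).comp x dm
    simpa [Function.comp_def] using this
  have d3 : HasDerivAt (fun y : ℝ => 2*c*(y-p)) (2*c*1) x :=
    (((hasDerivAt_id x).sub_const p)).const_mul (2*c)
  have := (((d1.sub d2).sub_const (Real.log p)).add_const (Real.log (1-p))).sub d3
  exact this.congr_deriv (by ring)

private lemma continuous_Ffun {p c : ℝ} : Continuous (Ffun p c) := by
  unfold Ffun
  apply Continuous.sub
  apply Continuous.sub
  apply Continuous.sub
  apply Continuous.add
  · exact Real.continuous_mul_log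
  · exact Real.continuous_mul_log.comp (continuous_const.sub continuous_id)
  · exact continuous_id.mul continuous_const
  · exact (continuous_const.sub continuous_id).mul continuous_const
  · exact continuous_const.mul ((continuous_id.sub continuous_const).pow 2)

private lemma G_mono {p c l r : ℝ} (hl : 0 < l) (hr : r < 1) (hlr : l ≤ r)
    (h : ∀ x ∈ Set.Icc l r, 2*c*(x*(1-x)) ≤ 1) : Gfun p c l ≤ Gfun p c r := by
  apply le_of_deriv_nonneg' (f' := fun x => x⁻¹ + (1-x)⁻¹ - 2*c) hlr
  · intro x hx
    exact (hasDerivAt_Gfun (hl.trans_le hx.1) (lt_of_le_of_lt hx.2 hr)).continuousAt.continuousWithinAt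
  · intro x hx
    exact hasDerivAt_Gfun (hl.trans hx.1) (hx.2.trans hr)
  · intro x hx
    have hx0 : 0 < x := hl.trans hx.1
    have hx1 : x < 1 := hx.2.trans hr
    have hh := h x ⟨hx.1.le, hx.2.le⟩
    have hx0' : x ≠ 0 := hx0.ne'
    have hx1' : (1:ℝ)-x ≠ 0 := by intro hzz; linarith [hx1]
    have he : x⁻¹ + (1-x)⁻¹ = 1/(x*(1-x)) := by
      field_simp
      ring
    have hpos : (0:ℝ) < x*(1-x) := by nlinarith
    have key : 2*c ≤ x⁻¹ + (1-x)⁻¹ := by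
      rw [he, le_div_iff₀ hpos]
      linarith
    linarith

private lemma G_anti {p c l r : ℝ} (hl : 0 < l) (hr : r < 1) (hlr : l ≤ r)
    (h : ∀ x ∈ Set.Icc l r, 1 ≤ 2*c*(x*(1-x))) : Gfun p c r ≤ Gfun p c l := by
  apply le_of_deriv_nonpos' (f' := fun x => x⁻¹ + (1-x)⁻¹ - 2*c) hlr
  · intro x hx
    exact (hasDerivAt_Gfun (hl.trans_le hx.1) (lt_of_le_of_lt hx.2 hr)).continuousAt.continuousWithinAt
  · intro x hx
    exact hasDerivAt_Gfun (hl.trans hx.1) (hx.2.trans hr)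
  · intro x hx
    have hx0 : 0 < x := hl.trans hx.1
    have hx1 : x < 1 := hx.2.trans hr
    have hh := h x ⟨hx.1.le, hx.2.le⟩
    have hx0' : x ≠ 0 := hx0.ne'
    have hx1' : (1:ℝ)-x ≠ 0 := by intro hzz; linarith [hx1]
    have he : x⁻¹ + (1-x)⁻¹ = 1/(x*(1-x)) := by
      field_simp
      ring
    have hpos : (0:ℝ) < x*(1-x) := by nlinarith
    have key : x⁻¹ + (1-x)⁻¹ ≤ 2*c := by
      rw [he, div_le_iff₀ hpos]
      linarith
    linarith

private lemma F_mono {p c l r : ℝ} (hl : 0 ≤ l) (hr : r ≤ 1) (hlr : l ≤ r)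
    (hG : ∀ x ∈ Set.Ioo l r, 0 ≤ Gfun p c x) : Ffun p c l ≤ Ffun p c r :=
  le_of_deriv_nonneg' hlr continuous_Ffun.continuousOn
    (fun x hx => hasDerivAt_Ffun (hl.trans_lt hx.1) (hx.2.trans_le hr)) hG

private lemma F_anti {p c l r : ℝ} (hl : 0 ≤ l) (hr : r ≤ 1) (hlr : l ≤ r)
    (hG : ∀ x ∈ Set.Ioo l r, Gfun p c x ≤ 0) : Ffun p c r ≤ Ffun p c l :=
  le_of_deriv_nonpos' hlr continuous_Ffun.continuousOn
    (fun x hx => hasDerivAt_Ffun (hl.trans_lt hx.1) (hx.2.trans_le hr)) hG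

/- ### The key binary inequality (Ordentlich–Weinberger) -/

set_option maxHeartbeats 1600000 in
private lemma binary_half {p a : ℝ} (hp0 : 0 < p) (hp2 : p ≤ 1/2) (ha0 : 0 ≤ a) (ha1 : a ≤ 1) :
    0 ≤ Ffun p (phiFun p) a := by
  set c := phiFun p with hc
  have hp1 : p < 1 := by linarith
  have hc2 : 2 ≤ c := two_le_phi hp0 hp2
  have hc0 : 0 < c := by linarith
  have hkey : Real.log (1-p) - Real.log p = c*(1-2*p) := log_ratio hp0 hp2
  have hcp : 2*c*(p*(1-p)) ≤ 1 := by
    rw [hc]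
    linarith [phi_mul_aux hp0 hp2]
  have hFp : Ffun p c p = 0 := by unfold Ffun; ring
  have hF1p : Ffun p c (1-p) = 0 := by
    unfold Ffun
    rw [show (1:ℝ)-(1-p) = p by ring]
    linear_combination (1-2*p) * hkey
  have hGp : Gfun p c p = 0 := by unfold Gfun; ring
  have hG1p : Gfun p c (1-p) = 0 := by
    unfold Gfun
    rw [show (1:ℝ)-(1-p) = p by ring]
    linear_combination 2 * hkey
  -- lower region: a ≤ p
  have hmono_low : ∀ x, 0 ≤ x → x ≤ p → 0 ≤ Ffun p c x := by
    intro x hx0 hxp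
    have hdrop := F_anti (p := p) (c := c) (l := x) (r := p) hx0 (by linarith) hxp ?_
    · linarith [hFp]
    intro y hy
    have hy0 : 0 < y := lt_of_le_of_lt hx0 hy.1
    have hGy := G_mono (p := p) (c := c) hy0 hp1 hy.2.le ?_
    · linarith [hGp]
    intro z hz
    have hz0 : 0 < z := hy0.trans_le hz.1
    have hzp : z ≤ p := hz.2
    have hprod : 0 ≤ 2*c*((p-z)*(1-p-z)) :=
      mul_nonneg (by linarith) (mul_nonneg (by linarith) (by linarith))
    nlinarith [hcp, hprod]
  -- upper region: 1-p ≤ a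
  have hmono_high : ∀ x, 1-p ≤ x → x ≤ 1 → 0 ≤ Ffun p c x := by
    intro x hx1p hx1
    have hrise := F_mono (p := p) (c := c) (l := 1-p) (r := x) (by linarith) hx1 hx1p ?_
    · linarith [hF1p]
    intro y hy
    have hy1 : y < 1 := lt_of_lt_of_le hy.2 hx1
    have hGy := G_mono (p := p) (c := c) (l := 1-p) (r := y) (by linarith) hy1 hy.1.le ?_
    · linarith [hG1p]
    intro z hz
    have hz1 : z < 1 := lt_of_le_of_lt hz.2 hy1
    have hz1p : 1-p ≤ z := hz.1
    have hprod : 0 ≤ 2*c*((p-(1-z))*(1-p-(1-z))) :=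
      mul_nonneg (by linarith) (mul_nonneg (by linarith) (by linarith))
    nlinarith [hcp, hprod]
  rcases le_or_gt a p with hap | hap
  · exact hmono_low a ha0 hap
  rcases le_or_gt (1-p) a with hpa | hpa
  · exact hmono_high a hpa ha1
  -- middle region: p < a < 1-p
  have ha0' : 0 < a := hp0.trans hap
  have ha1'' : a < 1 := by linarith
  set s := Real.sqrt (1 - 2/c) with hs
  have hs2 : s^2 = 1 - 2/c := Real.sq_sqrt (by
    rw [sub_nonneg, div_le_one hc0]; linarith)
  have hs0 : 0 ≤ s := Real.sqrt_nonneg _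
  have hs1 : s < 1 := by
    nlinarith [div_pos (by norm_num : (0:ℝ) < 2) hc0]
  have hcs : c * s^2 = c - 2 := by
    rw [hs2]
    field_simp
  have hspb : s ≤ 1-2*p := by
    have h2 : 1 - 2/c ≤ (1-2*p)^2 := by
      rw [sub_le_iff_le_add, ← sub_le_iff_le_add', le_div_iff₀ hc0]
      nlinarith [hcp]
    calc s = Real.sqrt (1-2/c) := rfl
      _ ≤ Real.sqrt ((1-2*p)^2) := Real.sqrt_le_sqrt h2
      _ = 1-2*p := by rw [Real.sqrt_sq (by linarith)]
  have hpa1 : p ≤ (1-s)/2 := by linarith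
  have ha2p : (1+s)/2 ≤ 1-p := by linarith
  -- region facts
  have c1 : ∀ z, 0 < z → z ≤ (1-s)/2 → 2*c*(z*(1-z)) ≤ 1 := by
    intro z hz0 hz1
    have hsq : s^2 ≤ (1-2*z)^2 := by nlinarith
    have := mul_le_mul_of_nonneg_left hsq hc0.le
    nlinarith [hcs]
  have c2 : ∀ z, z < 1 → (1+s)/2 ≤ z → 2*c*(z*(1-z)) ≤ 1 := by
    intro z hz1 hz2
    have hsq : s^2 ≤ (1-2*z)^2 := by nlinarith
    have := mul_le_mul_of_nonneg_left hsq hc0.le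
    nlinarith [hcs]
  have c3 : ∀ z, (1-s)/2 ≤ z → z ≤ (1+s)/2 → 1 ≤ 2*c*(z*(1-z)) := by
    intro z hz1 hz2
    have hsq : (1-2*z)^2 ≤ s^2 := by nlinarith
    have := mul_le_mul_of_nonneg_left hsq hc0.le
    nlinarith [hcs]
  have Gpos_upto_a1 : ∀ y, p ≤ y → y ≤ (1-s)/2 → 0 ≤ Gfun p c y := by
    intro y hy1 hy2
    have hy1' : y < 1 := by linarith
    have := G_mono (p := p) (c := c) hp0 hy1' hy1
      (fun z hz => c1 z (hp0.trans_le hz.1) (hz.2.trans hy2))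
    linarith [hGp]
  have Gneg_from_a2 : ∀ y, (1+s)/2 ≤ y → y ≤ 1-p → Gfun p c y ≤ 0 := by
    intro y hy1 hy2
    have hy0 : 0 < y := by linarith
    have := G_mono (p := p) (c := c) (l := y) (r := 1-p) hy0 (by linarith) hy2
      (fun z hz => c2 z (by linarith [hz.2]) (hy1.trans hz.1))
    linarith [hG1p]
  have Ganti_mid : ∀ y z, (1-s)/2 ≤ y → y ≤ z → z ≤ (1+s)/2 →
      Gfun p c z ≤ Gfun p c y := by
    intro y z h1 h2 h3
    exact G_anti (by linarith) (by linarith) h2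
      (fun w hw => c3 w (h1.trans hw.1) (hw.2.trans h3))
  rcases le_or_gt a ((1-s)/2) with hA | hA
  · have := F_mono (p := p) (c := c) hp0.le ha1''.le hap.le
      (fun y hy => Gpos_upto_a1 y hy.1.le (hy.2.le.trans hA))
    linarith [hFp]
  rcases le_or_gt ((1+s)/2) a with hB | hB
  · have := F_anti (p := p) (c := c) (l := a) (r := 1-p) ha0'.le (by linarith) hpa.le
      (fun y hy => Gneg_from_a2 y (hB.trans hy.1.le) hy.2.le)
    linarith [hF1p]
  rcases le_or_gt 0 (Gfun p c a) with hGa | hGa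
  · have := F_mono (p := p) (c := c) hp0.le ha1''.le hap.le (fun y hy => by
      rcases le_or_gt y ((1-s)/2) with h | h
      · exact Gpos_upto_a1 y hy.1.le h
      · have := Ganti_mid y a h.le hy.2.le hB.le
        linarith)
    linarith [hFp]
  · have := F_anti (p := p) (c := c) (l := a) (r := 1-p) ha0'.le (by linarith) hpa.le
      (fun y hy => by
        rcases le_or_gt ((1+s)/2) y with h | h
        · exact Gneg_from_a2 y h hy.2.le
        · have := Ganti_mid a y hA.le hy.1.le h.le
          linarith)
    linarith [hF1p]

private lemma Ffun_eq {p a : ℝ} (hp0 : 0 < p) (hp1 : p < 1) (ha0 : 0 ≤ a) (ha1 : a ≤ 1)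
    (c : ℝ) :
    Ffun p c a = a * Real.log (a/p) + (1-a) * Real.log ((1-a)/(1-p)) - c*(a-p)^2 := by
  unfold Ffun
  rcases eq_or_lt_of_le ha0 with h0 | h0
  · rw [← h0]
    simp [Real.log_div (by norm_num : (1:ℝ) ≠ 0) (by linarith : (1:ℝ)-p ≠ 0)]
  rcases eq_or_lt_of_le ha1 with h1 | h1
  · rw [h1]
    simp [Real.log_div (by norm_num : (1:ℝ) ≠ 0) hp0.ne']
  rw [Real.log_div h0.ne' hp0.ne', Real.log_div (by linarith : (1:ℝ)-a ≠ 0) (by linarith : (1:ℝ)-p ≠ 0)]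
  ring

private lemma binary_bound {p a : ℝ} (hp0 : 0 < p) (hp1 : p < 1) (ha0 : 0 ≤ a) (ha1 : a ≤ 1) :
    phiFun (min p (1-p)) * (a-p)^2 ≤
      a * Real.log (a/p) + (1-a) * Real.log ((1-a)/(1-p)) := by
  rcases le_or_gt p (1/2) with h | h
  · rw [min_eq_left (by linarith)]
    have hb := binary_half hp0 h ha0 ha1
    rw [Ffun_eq hp0 hp1 ha0 ha1] at hb
    linarith
  · rw [min_eq_right (by linarith)]
    have hb := binary_half (p := 1-p) (a := 1-a) (by linarith) (by linarith)
      (by linarith) (by linarith)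
    rw [Ffun_eq (by linarith) (by linarith) (by linarith) (by linarith)] at hb
    rw [show (1:ℝ)-(1-a) = a by ring, show (1:ℝ)-(1-p) = p by ring] at hb
    rw [show ((1:ℝ)-a-(1-p))^2 = (a-p)^2 by ring] at hb
    linarith

/- ### Log-sum inequality (data processing) -/

private lemma logsum {𝒳 : Type*} [Fintype 𝒳] (R P : 𝒳 → ℝ) (hR : ∀ x, 0 ≤ R x)
    (hP : ∀ x, 0 < P x) (s : Finset 𝒳) :
    (∑ x ∈ s, R x) * Real.log ((∑ x ∈ s, R x)/(∑ x ∈ s, P x)) ≤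
      ∑ x ∈ s, R x * Real.log (R x / P x) := by
  rcases s.eq_empty_or_nonempty with rfl | hs
  · simp
  have hq : 0 < ∑ x ∈ s, P x := Finset.sum_pos (fun x _ => hP x) hs
  set q := ∑ x ∈ s, P x with hqdef
  set A := ∑ x ∈ s, R x with hAdef
  have hjen := Real.convexOn_mul_log.map_sum_le (t := s) (w := fun x => P x / q)
      (p := fun x => R x / P x)
      (fun x _ => div_nonneg (hP x).le hq.le)
      (by rw [← Finset.sum_div, div_self hq.ne'])
      (fun x _ => Set.mem_Ici.2 (div_nonneg (hR x) (hP x).le))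
  have h1 : ∑ x ∈ s, (P x / q) • (R x / P x) = A / q := by
    rw [Finset.sum_congr rfl (fun x _ => show (P x / q) • (R x / P x) = R x / q by
      have hPx : P x ≠ 0 := (hP x).ne'
      have hq' : q ≠ 0 := hq.ne'
      rw [smul_eq_mul]
      field_simp), ← Finset.sum_div]
  have h2 : ∑ x ∈ s, (P x / q) • ((R x / P x) * Real.log (R x / P x))
      = (∑ x ∈ s, R x * Real.log (R x / P x)) / q := by
    rw [Finset.sum_congr rfl (fun x _ => show (P x / q) • ((R x / P x) * Real.log (R x / P x))
        = (R x * Real.log (R x / P x)) / q by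
      have hPx : P x ≠ 0 := (hP x).ne'
      have hq' : q ≠ 0 := hq.ne'
      rw [smul_eq_mul]
      field_simp), ← Finset.sum_div]
  rw [h1, h2] at hjen
  have := mul_le_mul_of_nonneg_left hjen hq.le
  have e1 : q * (A/q * Real.log (A/q)) = A * Real.log (A/q) := by
    field_simp
  have e2 : q * ((∑ x ∈ s, R x * Real.log (R x / P x))/q)
      = ∑ x ∈ s, R x * Real.log (R x / P x) := by
    field_simp
  rw [e1, e2] at this
  exact this

/- ### Main theorem -/

/-- `D(R‖P) ≥ (φ(max_A min{P(A),1−P(A)}) ⬝ minₓ P(x) / 2) ⬝ χ²(R‖P)`. -/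
theorem kl_ge_phi_min_mul_chiSq
    {𝒳 : Type*} [Fintype 𝒳] [Nonempty 𝒳] (hcard : 2 ≤ Fintype.card 𝒳)
    (R P : 𝒳 → ℝ) (hR : IsPmf R) (hP : IsPmf P) (hPpos : ∀ x, 0 < P x) :
    phiFun (balSep P) * Finset.univ.inf' Finset.univ_nonempty P / 2 * chiSq R P
      ≤ klDiv R P := by
  classical
  obtain ⟨hR0, hR1⟩ := hR
  obtain ⟨hP0, hP1⟩ := hP
  set m := Finset.univ.inf' Finset.univ_nonempty P with hm
  have hm0 : 0 < m := by
    rw [hm, Finset.lt_inf'_iff]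
    exact fun x _ => hPpos x
  have hmle : ∀ x, m ≤ P x := fun x => Finset.inf'_le _ (Finset.mem_univ x)
  have hpi2 : balSep P ≤ 1/2 := by
    apply Finset.sup'_le
    intro B hB
    rcases le_or_gt (∑ x ∈ B, P x) (1/2) with h | h
    · exact le_trans (min_le_left _ _) h
    · exact le_trans (min_le_right _ _) (by linarith)
  have hpi0 : 0 < balSep P := by
    obtain ⟨x₀, x₁, hne⟩ := Fintype.exists_pair_of_one_lt_card
      (show 1 < Fintype.card 𝒳 by omega)
    have hsum2 : P x₀ + P x₁ ≤ 1 := by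
      rw [← hP1, ← Finset.sum_pair hne]
      exact Finset.sum_le_sum_of_subset_of_nonneg (Finset.subset_univ _) (fun x _ _ => hP0 x)
    have hmem : ({x₀} : Finset 𝒳) ∈ (Finset.univ : Finset 𝒳).powerset :=
      Finset.mem_powerset.2 (Finset.subset_univ _)
    have hle := Finset.le_sup'
      (fun B => min (∑ x ∈ B, P x) (1 - ∑ x ∈ B, P x)) hmem
    simp only [Finset.sum_singleton] at hle
    have h1 : 0 < min (P x₀) (1 - P x₀) := lt_min (hPpos x₀) (by linarith [hPpos x₁])
    exact lt_of_lt_of_le h1 hle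
  have hphi2 : 2 ≤ phiFun (balSep P) := two_le_phi hpi0 hpi2
  by_cases hRP : R = P
  · subst hRP
    have hkl : klDiv R R = 0 := by
      unfold klDiv
      apply Finset.sum_eq_zero
      intro x _
      rw [div_self (hPpos x).ne', Real.log_one, mul_zero]
    have hchi : chiSq R R = 0 := by
      unfold chiSq
      apply Finset.sum_eq_zero
      intro x _
      simp
    rw [hkl, hchi, mul_zero]
  set A := Finset.univ.filter (fun x => P x ≤ R x) with hA
  set a := ∑ x ∈ A, R x with hadef
  set p := ∑ x ∈ A, P x with hpdef
  have hAmem : ∀ x, x ∈ A ↔ P x ≤ R x := fun x => by rw [hA]; simp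
  have hAc : ∀ x, x ∈ Aᶜ ↔ R x < P x := fun x => by
    rw [Finset.mem_compl, hAmem]; exact not_le
  have hAne : A.Nonempty := by
    by_contra h
    rw [Finset.not_nonempty_iff_eq_empty] at h
    have hlt : ∀ x ∈ Finset.univ, R x < P x := by
      intro x _
      by_contra hx
      have : x ∈ A := (hAmem x).2 (not_lt.1 hx)
      rw [h] at this
      exact absurd this (Finset.notMem_empty x)
    have := Finset.sum_lt_sum_of_nonempty Finset.univ_nonempty hlt
    rw [hR1, hP1] at this
    exact lt_irrefl 1 this
  have hAcne : Aᶜ.Nonempty := by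
    by_contra h
    rw [Finset.not_nonempty_iff_eq_empty] at h
    have hall : ∀ x ∈ Finset.univ, P x ≤ R x := by
      intro x _
      by_contra hx
      have : x ∈ Aᶜ := (hAc x).2 (not_le.1 hx)
      rw [h] at this
      exact absurd this (Finset.notMem_empty x)
    apply hRP
    funext x
    by_contra hne
    have hlt : P x < R x := lt_of_le_of_ne (hall x (Finset.mem_univ x)) (fun he => hne he.symm)
    have := Finset.sum_lt_sum hall ⟨x, Finset.mem_univ x, hlt⟩
    rw [hR1, hP1] at this
    exact lt_irrefl 1 this
  have hsumc : ∀ (f : 𝒳 → ℝ), ∑ x ∈ A, f x + ∑ x ∈ Aᶜ, f x = ∑ x, f x := fun f =>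
    Finset.sum_add_sum_compl A f
  have hp0' : 0 < p := Finset.sum_pos (fun x _ => hPpos x) hAne
  have hp1' : p < 1 := by
    have h2 := Finset.sum_pos (fun x (_ : x ∈ Aᶜ) => hPpos x) hAcne
    have h3 := hsumc P
    rw [hP1, ← hpdef] at h3
    linarith
  have ha0' : 0 ≤ a := Finset.sum_nonneg fun x _ => hR0 x
  have ha1' : a ≤ 1 := by
    rw [← hR1, hadef]
    exact Finset.sum_le_sum_of_subset_of_nonneg (Finset.subset_univ A) (fun x _ _ => hR0 x)
  have hacsum : ∑ x ∈ Aᶜ, R x = 1 - a := by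
    have := hsumc R
    rw [hR1, ← hadef] at this
    linarith
  have hpcsum : ∑ x ∈ Aᶜ, P x = 1 - p := by
    have := hsumc P
    rw [hP1, ← hpdef] at this
    linarith
  have hap : p ≤ a := Finset.sum_le_sum (fun x hx => (hAmem x).1 hx)
  have hAsum : ∑ y ∈ A, (R y - P y) = a - p := by
    rw [Finset.sum_sub_distrib, ← hadef, ← hpdef]
  have hAcsum' : ∑ y ∈ Aᶜ, (P y - R y) = a - p := by
    rw [Finset.sum_sub_distrib, hacsum, hpcsum]
    ring
  have habs : ∀ x, |R x - P x| ≤ a - p := by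
    intro x
    rcases le_or_gt (P x) (R x) with h | h
    · rw [abs_of_nonneg (by linarith), ← hAsum]
      exact Finset.single_le_sum (f := fun y => R y - P y)
        (fun y hy => show (0:ℝ) ≤ R y - P y from sub_nonneg.2 ((hAmem y).1 hy))
        ((hAmem x).2 h)
    · rw [abs_of_neg (by linarith), neg_sub, ← hAcsum']
      exact Finset.single_le_sum (f := fun y => P y - R y)
        (fun y hy => show (0:ℝ) ≤ P y - R y from sub_nonneg.2 (le_of_lt ((hAc y).1 hy)))
        ((hAc x).2 h)
  have habs_sum : ∑ x, |R x - P x| = 2*(a-p) := by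
    rw [← hsumc (fun x => |R x - P x|)]
    have e1 : ∑ x ∈ A, |R x - P x| = a - p := by
      rw [Finset.sum_congr rfl (fun x hx => abs_of_nonneg (by linarith [(hAmem x).1 hx])),
        Finset.sum_sub_distrib, ← hadef, ← hpdef]
    have e2 : ∑ x ∈ Aᶜ, |R x - P x| = a - p := by
      rw [Finset.sum_congr rfl (fun x hx => by
        rw [abs_of_neg (by linarith [(hAc x).1 hx]), neg_sub])]
      exact hAcsum'
    rw [e1, e2]
    ring
  have hchi : chiSq R P ≤ 2*(a-p)^2/m := by
    unfold chiSq
    calc ∑ x, (R x - P x)^2 / P x ≤ ∑ x, (a-p)*|R x - P x|/m := by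
          apply Finset.sum_le_sum
          intro x _
          apply div_le_div₀ (mul_nonneg (sub_nonneg.2 hap) (abs_nonneg _)) ?_ hm0 (hmle x)
          have hsq : (R x - P x)^2 = |R x - P x| * |R x - P x| := by
            rw [abs_mul_abs_self]
            ring
          rw [hsq]
          exact mul_le_mul_of_nonneg_right (habs x) (abs_nonneg _)
      _ = (a-p)*(2*(a-p))/m := by
          rw [← Finset.sum_div, ← Finset.mul_sum, habs_sum]
      _ = 2*(a-p)^2/m := by ring
  have hbin := binary_bound hp0' hp1' ha0' ha1'
  have hq : min p (1-p) ≤ balSep P := by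
    have hmem : A ∈ (Finset.univ : Finset 𝒳).powerset :=
      Finset.mem_powerset.2 (Finset.subset_univ _)
    exact Finset.le_sup' (fun B => min (∑ x ∈ B, P x) (1 - ∑ x ∈ B, P x)) hmem
  have hq0 : 0 < min p (1-p) := lt_min hp0' (by linarith)
  have hphi : phiFun (balSep P) ≤ phiFun (min p (1-p)) := phi_antitone hq0 hq hpi2
  have hDP : a * Real.log (a/p) + (1-a) * Real.log ((1-a)/(1-p)) ≤ klDiv R P := by
    unfold klDiv
    rw [← hsumc (fun x => R x * Real.log (R x / P x))]
    have h1 := logsum R P hR0 hPpos A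
    rw [← hadef, ← hpdef] at h1
    have h2 := logsum R P hR0 hPpos Aᶜ
    rw [hacsum, hpcsum] at h2
    linarith
  have hcoef : 0 ≤ phiFun (balSep P) * m / 2 :=
    div_nonneg (mul_nonneg (by linarith) hm0.le) (by norm_num)
  calc phiFun (balSep P) * m / 2 * chiSq R P
      ≤ phiFun (balSep P) * m / 2 * (2*(a-p)^2/m) := mul_le_mul_of_nonneg_left hchi hcoef
    _ = phiFun (balSep P) * (a-p)^2 := by
        field_simp
    _ ≤ phiFun (min p (1-p)) * (a-p)^2 := mul_le_mul_of_nonneg_right hphi (sq_nonneg _)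
    _ ≤ _ := hbin.trans hDP
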